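/- Let m : [0,∞) → ℝ≥0 be a bounded measurable solution of the renewal equation m(t) = e^{-νt}·f(t) + ∫₀^t ν e^{-νu} m(t-u) du, where ν > 0 and f : [0,∞) → ℝ≥0 is nondecreasing with ∫₀^∞ e^{-νt} f(t) dt < ∞. Then lim_{t→∞} m(t) = ν·∫₀^∞ e^{-νt} f(t) dt. -/

import Mathlib

open Filter MeasureTheory

theorem stmt_19 (m f : ℝ → ℝ) (ν : ℝ) (hν : 0 < ν)
    (hmmeas : Measurable m) (hmnn : ∀ t ≥ (0:ℝ), 0 ≤ m t)
    (hmbdd : ∃ M : ℝ, ∀ t ≥ (0:ℝ), m t ≤ M)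
    (hfnn : ∀ t ≥ (0:ℝ), 0 ≤ f t) (hfmono : MonotoneOn f (Set.Ici (0:ℝ)))
    (hfint : IntegrableOn (fun t => Real.exp (-ν * t) * f t) (Set.Ici (0:ℝ)))
    (hren : ∀ t ≥ (0:ℝ),
      m t = Real.exp (-ν * t) * f t + ∫ u in (0:ℝ)..t, ν * Real.exp (-ν * u) * m (t - u)) :
    Tendsto m atTop (nhds (ν * ∫ t in Set.Ioi (0:ℝ), Real.exp (-ν * t) * f t)) := by
  obtain ⟨Mb, hMb⟩ := hmbdd
  set M : ℝ → ℝ := fun t => m (max t 0) with hMdef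
  set fe : ℝ → ℝ := fun t => f (max t 0) with hfedef
  have hνne : ν ≠ 0 := ne_of_gt hν
  have hfe_mono : Monotone fe := fun a b hab =>
    hfmono (Set.mem_Ici.mpr (le_max_right a 0)) (Set.mem_Ici.mpr (le_max_right b 0))
      (max_le_max hab le_rfl)
  have hfe_meas : Measurable fe := hfe_mono.measurable
  have hfe_nn : ∀ t, 0 ≤ fe t := fun t => hfnn _ (le_max_right t 0)
  have hM_meas : Measurable M := hmmeas.comp (measurable_id.max measurable_const)
  have hM_nn : ∀ t, 0 ≤ M t := fun t => hmnn _ (le_max_right t 0)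
  have hM_le : ∀ t, M t ≤ Mb := fun t => hMb _ (le_max_right t 0)
  have hMb0 : 0 ≤ Mb := le_trans (hM_nn 0) (hM_le 0)
  -- interval integrability of the exponentially weighted process
  have hMii : ∀ a b : ℝ, IntervalIntegrable (fun v => Real.exp (ν * v) * M v) volume a b := by
    intro a b
    rw [intervalIntegrable_iff]
    apply Measure.integrableOn_of_bounded (M := Real.exp (ν * max a b) * Mb)
    · exact (measure_Ioc_lt_top).ne
    · exact (((measurable_const.mul measurable_id).exp.mul hM_meas)).aestronglyMeasurable
    · filter_upwards [ae_restrict_mem measurableSet_Ioc] with v hv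
      have hv' : v ≤ max a b := hv.2
      have h1 : Real.exp (ν * v) ≤ Real.exp (ν * max a b) :=
        Real.exp_le_exp.mpr (by nlinarith)
      rw [Real.norm_eq_abs, abs_of_nonneg (mul_nonneg (Real.exp_pos _).le (hM_nn v))]
      exact mul_le_mul h1 (hM_le v) (hM_nn v) (Real.exp_pos _).le
  set G : ℝ → ℝ := fun t => ∫ v in (0:ℝ)..t, Real.exp (ν * v) * M v with hGdef
  have hm0 : m 0 = f 0 := by have := hren 0 le_rfl; simpa using this
  -- the key pointwise identity, valid for ALL real t
  have hstar : ∀ t : ℝ, Real.exp (ν * t) * M t = fe t + ν * G t := by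
    intro t
    rcases le_or_gt 0 t with ht | ht
    · have hmax : max t 0 = t := max_eq_left ht
      have hm := hren t ht
      have h1 : (∫ u in (0:ℝ)..t, ν * Real.exp (-ν * u) * m (t - u))
          = ν * Real.exp (-ν * t) * G t := by
        have e1 : ∫ u in (0:ℝ)..t, ν * Real.exp (-ν * u) * m (t - u)
            = ∫ u in (0:ℝ)..t,
              (fun v => ν * Real.exp (-ν * t) * (Real.exp (ν * v) * M v)) (t - u) := by
          apply intervalIntegral.integral_congr
          intro u hu
          rw [Set.uIcc_of_le ht] at hu
          have h2 : max (t - u) 0 = t - u := max_eq_left (by linarith [hu.1, hu.2])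
          simp only [hMdef, h2]
          have he : Real.exp (-ν * t) * Real.exp (ν * (t - u)) = Real.exp (-ν * u) := by
            rw [← Real.exp_add]; congr 1; ring
          linear_combination (-(ν * m (t - u))) * he
        rw [e1, intervalIntegral.integral_comp_sub_left
          (fun v => ν * Real.exp (-ν * t) * (Real.exp (ν * v) * M v)) t]
        simp only [sub_self, sub_zero]
        rw [intervalIntegral.integral_const_mul]
      rw [h1] at hm
      have he : Real.exp (ν * t) * Real.exp (-ν * t) = 1 := by
        rw [← Real.exp_add]; ring_nf; exact Real.exp_zero
      simp only [hMdef, hfedef, hmax]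
      linear_combination Real.exp (ν * t) * hm + (f t + ν * G t) * he
    · have hmax : max t 0 = 0 := max_eq_right ht.le
      have hGt : G t = m 0 * ((Real.exp (ν * t) - 1) / ν) := by
        have e1 : G t = ∫ v in (0:ℝ)..t, Real.exp (ν * v) * m 0 := by
          apply intervalIntegral.integral_congr
          intro v hv
          rw [Set.uIcc_of_ge ht.le] at hv
          have : max v 0 = 0 := max_eq_right hv.2
          simp only [hMdef, this]
        have e2 : ∫ v in (0:ℝ)..t, Real.exp (ν * v)
            = (Real.exp (ν * t) - 1) / ν := by
          have hd : ∀ x ∈ Set.uIcc (0:ℝ) t,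
              HasDerivAt (fun v => Real.exp (ν * v) / ν) (Real.exp (ν * x)) x := by
            intro x _
            have h1 : HasDerivAt (fun v : ℝ => ν * v) ν x := by
              simpa using (hasDerivAt_id x).const_mul ν
            have := (h1.exp).div_const ν
            refine this.congr_deriv ?_
            field_simp
          rw [intervalIntegral.integral_eq_sub_of_hasDerivAt hd
            ((Real.continuous_exp.comp (continuous_const.mul continuous_id)).intervalIntegrable 0 t)]
          simp [Real.exp_zero]
          ring
        rw [e1, intervalIntegral.integral_mul_const, e2]
        ring
      simp only [hMdef, hfedef, hmax, hGt, hm0]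
      field_simp
      ring
  set F : ℝ → ℝ := fun t => ∫ v in (0:ℝ)..t, fe v with hFdef
  set Q : ℝ → ℝ := fun t => ∫ v in (0:ℝ)..t, G v with hQdef
  have hfeii : ∀ a b : ℝ, IntervalIntegrable fe volume a b := fun a b =>
    hfe_mono.intervalIntegrable
  have hGcont : Continuous G := intervalIntegral.continuous_primitive hMii 0
  have hFcont : Continuous F := intervalIntegral.continuous_primitive hfeii 0
  have hGF : ∀ t : ℝ, G t = F t + ν * Q t := by
    intro t
    have e1 : G t = ∫ v in (0:ℝ)..t, (fe v + ν * G v) := by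
      apply intervalIntegral.integral_congr
      intro v _
      exact hstar v
    rw [e1, intervalIntegral.integral_add (hfeii 0 t)
      ((hGcont.intervalIntegrable 0 t).const_mul ν),
      intervalIntegral.integral_const_mul]
  have hQderiv : ∀ t : ℝ, HasDerivAt Q (G t) t := fun t =>
    intervalIntegral.integral_hasDerivAt_right (hGcont.intervalIntegrable 0 t)
      (hGcont.stronglyMeasurableAtFilter volume _) hGcont.continuousAt
  set T : ℝ → ℝ := fun t => ∫ s in (0:ℝ)..t, Real.exp (-ν * s) * F s with hTdef
  have hTcont_int : Continuous fun s => Real.exp (-ν * s) * F s :=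
    (Real.continuous_exp.comp (continuous_const.mul continuous_id)).mul hFcont
  have hTderiv : ∀ t : ℝ, HasDerivAt T (Real.exp (-ν * t) * F t) t := fun t =>
    intervalIntegral.integral_hasDerivAt_right (hTcont_int.intervalIntegrable 0 t)
      (hTcont_int.stronglyMeasurableAtFilter volume _) hTcont_int.continuousAt
  -- e^{-νt} Q t = T t
  have hRT : ∀ t : ℝ, Real.exp (-ν * t) * Q t = T t := by
    have hder : ∀ t : ℝ, HasDerivAt (fun t => Real.exp (-ν * t) * Q t - T t) 0 t := by
      intro t
      have h1 : HasDerivAt (fun t : ℝ => -ν * t) (-ν) t := by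
        simpa using (hasDerivAt_id t).const_mul (-ν)
      have h2 := (h1.exp.mul (hQderiv t)).sub (hTderiv t)
      refine h2.congr_deriv ?_
      rw [hGF t]
      ring
    have hconst := is_const_of_deriv_eq_zero
      (fun t => (hder t).differentiableAt) (fun t => (hder t).deriv)
    intro t
    have := hconst t 0
    simp only [hQdef, hTdef, intervalIntegral.integral_same, mul_zero, sub_zero] at this
    linarith [this]
  set K : ℝ → ℝ := fun t => ∫ s in (0:ℝ)..t, Real.exp (-ν * s) * fe s with hKdef
  have hKii : ∀ a b : ℝ, IntervalIntegrable (fun s => Real.exp (-ν * s) * fe s) volume a b :=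
    fun a b => (hfe_mono.intervalIntegrable).continuousOn_mul
      ((Real.continuous_exp.comp (continuous_const.mul continuous_id)).continuousOn)
  have hFIoc : ∀ s : ℝ, 0 ≤ s → F s = ∫ r in Set.Ioc (0:ℝ) s, fe r :=
    fun s hs => intervalIntegral.integral_of_le hs
  have hTIoc : ∀ s : ℝ, 0 ≤ s → T s = ∫ r in Set.Ioc (0:ℝ) s, Real.exp (-ν * r) * F r :=
    fun s hs => intervalIntegral.integral_of_le hs
  have hKIoc : ∀ s : ℝ, 0 ≤ s → K s = ∫ r in Set.Ioc (0:ℝ) s, Real.exp (-ν * r) * fe r :=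
    fun s hs => intervalIntegral.integral_of_le hs
  -- The Fubini identity : K t = e^{-νt} F t + ν T t  for t ≥ 0
  have hK : ∀ t : ℝ, 0 ≤ t → K t = Real.exp (-ν * t) * F t + ν * T t := by
    intro t ht
    set μt : Measure ℝ := volume.restrict (Set.Ioc (0:ℝ) t) with hμt
    set J : ℝ → ℝ → ℝ := fun s r => if r ≤ s then ν * Real.exp (-ν * s) * fe r else 0 with hJ
    have hJmeas : Measurable (Function.uncurry J) := by
      apply Measurable.ite (measurableSet_le measurable_snd measurable_fst)
      · exact ((measurable_const.mul ((measurable_fst.const_mul (-ν)).exp)).mul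
          (hfe_meas.comp measurable_snd))
      · exact measurable_const
    have hJint : Integrable (Function.uncurry J) (μt.prod μt) := by
      haveI : IsFiniteMeasure μt := by
        constructor
        rw [hμt, Measure.restrict_apply_univ]
        exact measure_Ioc_lt_top
      apply Integrable.mono' (g := fun _ => ν * fe t) (integrable_const _)
        hJmeas.aestronglyMeasurable
      rw [hμt, Measure.prod_restrict]
      filter_upwards [ae_restrict_mem (measurableSet_Ioc.prod measurableSet_Ioc)] with p hp
      obtain ⟨hp1, hp2⟩ := hp
      simp only [Function.uncurry, hJ]
      split_ifs with h
      · rw [Real.norm_eq_abs, abs_of_nonneg (mul_nonneg (mul_nonneg hν.le (Real.exp_pos _).le)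
          (hfe_nn _))]
        have he1 : Real.exp (-ν * p.1) ≤ 1 := Real.exp_le_one_iff.mpr (by nlinarith [hp1.1])
        have hf1 : fe p.2 ≤ fe t := hfe_mono hp2.2
        have h5 : Real.exp (-ν * p.1) * fe p.2 ≤ 1 * fe t :=
          mul_le_mul he1 hf1 (hfe_nn _) zero_le_one
        rw [mul_assoc]
        have := mul_le_mul_of_nonneg_left h5 hν.le
        linarith [this]
      · simp [mul_nonneg hν.le (hfe_nn t)]
    have hswap := integral_integral_swap hJint
    -- left side = ν * T t
    have hL : (∫ s, ∫ r, J s r ∂μt ∂μt) = ν * T t := by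
      have e1 : ∀ s ∈ Set.Ioc (0:ℝ) t, (∫ r, J s r ∂μt) = ν * Real.exp (-ν * s) * F s := by
        intro s hs
        have e2 : (fun r => J s r) = fun r =>
            Set.indicator (Set.Iic s) (fun r => ν * Real.exp (-ν * s) * fe r) r := by
          funext r
          simp [hJ, Set.indicator_apply, Set.mem_Iic]
        rw [e2, hμt, integral_indicator measurableSet_Iic,
          Measure.restrict_restrict measurableSet_Iic]
        have e3 : Set.Iic s ∩ Set.Ioc 0 t = Set.Ioc 0 s := by
          ext r
          constructor
          · rintro ⟨h1, h2, _⟩; exact ⟨h2, h1⟩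
          · rintro ⟨h1, h2⟩; exact ⟨h2, h1, h2.trans hs.2⟩
        rw [e3, integral_const_mul]
        congr 1
        exact (hFIoc s hs.1.le).symm
      rw [setIntegral_congr_fun measurableSet_Ioc e1]
      have : ∀ s : ℝ, ν * Real.exp (-ν * s) * F s = ν * (Real.exp (-ν * s) * F s) := fun s => by ring
      simp_rw [this]
      rw [integral_const_mul, hTIoc t ht]
    -- right side = K t - e^{-νt} F t
    have hR : (∫ r, ∫ s, J s r ∂μt ∂μt) = K t - Real.exp (-ν * t) * F t := by
      have e1 : ∀ r ∈ Set.Ioc (0:ℝ) t,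
          (∫ s, J s r ∂μt) = (Real.exp (-ν * r) - Real.exp (-ν * t)) * fe r := by
        intro r hr
        have e2 : (fun s => J s r) = fun s =>
            Set.indicator (Set.Ici r) (fun s => ν * Real.exp (-ν * s) * fe r) s := by
          funext s
          simp [hJ, Set.indicator_apply, Set.mem_Ici]
        rw [e2, hμt, integral_indicator measurableSet_Ici,
          Measure.restrict_restrict measurableSet_Ici]
        have e3 : Set.Ici r ∩ Set.Ioc 0 t = Set.Icc r t := by
          ext s
          constructor
          · rintro ⟨h1, _, h3⟩; exact ⟨h1, h3⟩
          · rintro ⟨h1, h2⟩; exact ⟨h1, hr.1.trans_le h1, h2⟩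
        rw [e3, integral_Icc_eq_integral_Ioc, ← intervalIntegral.integral_of_le hr.2]
        have e4 : ∀ s : ℝ, ν * Real.exp (-ν * s) * fe r = ν * Real.exp (-ν * s) * fe r := fun _ => rfl
        rw [intervalIntegral.integral_mul_const]
        congr 1
        have hd : ∀ x ∈ Set.uIcc r t,
            HasDerivAt (fun s => -Real.exp (-ν * s)) (ν * Real.exp (-ν * x)) x := by
          intro x _
          have h1 : HasDerivAt (fun s : ℝ => -ν * s) (-ν) x := by
            simpa using (hasDerivAt_id x).const_mul (-ν)
          have := (h1.exp).neg
          refine this.congr_deriv ?_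
          ring
        rw [intervalIntegral.integral_eq_sub_of_hasDerivAt hd
          ((continuous_const.mul
            (Real.continuous_exp.comp (continuous_const.mul continuous_id))).intervalIntegrable r t)]
        ring
      rw [setIntegral_congr_fun measurableSet_Ioc e1]
      have hint1 : IntegrableOn (fun r => Real.exp (-ν * r) * fe r) (Set.Ioc 0 t) volume :=
        (intervalIntegrable_iff_integrableOn_Ioc_of_le ht).mp (hKii 0 t)
      have hint2 : IntegrableOn fe (Set.Ioc 0 t) volume :=
        (intervalIntegrable_iff_integrableOn_Ioc_of_le ht).mp (hfeii 0 t)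
      have esplit : ∀ r : ℝ, (Real.exp (-ν * r) - Real.exp (-ν * t)) * fe r
          = Real.exp (-ν * r) * fe r - Real.exp (-ν * t) * fe r := fun r => by ring
      simp_rw [esplit]
      rw [integral_sub hint1 (hint2.const_mul _)]
      rw [integral_const_mul, hKIoc t ht, hFIoc t ht]
    rw [hL, hR] at hswap
    linarith [hswap]
  -- resulting explicit formula for m on [0, ∞)
  have hmK : ∀ t : ℝ, 0 ≤ t → m t = Real.exp (-ν * t) * f t + ν * K t := by
    intro t ht
    have hmax : max t 0 = t := max_eq_left ht
    have h3 := hstar t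
    simp only [hMdef, hfedef, hmax] at h3
    have he : Real.exp (ν * t) * Real.exp (-ν * t) = 1 := by
      rw [← Real.exp_add]; ring_nf; exact Real.exp_zero
    have h4 : m t = Real.exp (-ν * t) * (f t + ν * G t) := by
      calc m t = (Real.exp (ν * t) * Real.exp (-ν * t)) * m t := by rw [he]; ring
      _ = Real.exp (-ν * t) * (f t + ν * G t) := by
          linear_combination Real.exp (-ν * t) * h3
    rw [h4, hGF t, hK t ht, ← hRT t]
    ring
  -- limits
  have hKint : IntegrableOn (fun s => Real.exp (-ν * s) * fe s) (Set.Ioi (0:ℝ)) volume := by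
    apply IntegrableOn.congr_fun (hfint.mono_set Set.Ioi_subset_Ici_self) _ measurableSet_Ioi
    intro r hr
    simp only [hfedef, max_eq_left (le_of_lt (Set.mem_Ioi.mp hr))]
  have hKlim : Tendsto K atTop
      (nhds (∫ r in Set.Ioi (0:ℝ), Real.exp (-ν * r) * fe r)) := by
    exact intervalIntegral_tendsto_integral_Ioi 0 hKint tendsto_id
  have hIeq : (∫ t in Set.Ioi (0:ℝ), Real.exp (-ν * t) * f t)
      = ∫ r in Set.Ioi (0:ℝ), Real.exp (-ν * r) * fe r := by
    apply setIntegral_congr_fun measurableSet_Ioi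
    intro r hr
    simp only [hfedef, max_eq_left (le_of_lt (Set.mem_Ioi.mp hr))]
  have htail : Tendsto (fun t => Real.exp (-ν * t) * f t) atTop (nhds 0) := by
    have hK1 : Tendsto (fun t => K (t + 1)) atTop
        (nhds (∫ r in Set.Ioi (0:ℝ), Real.exp (-ν * r) * fe r)) :=
      hKlim.comp (tendsto_atTop_add_const_right atTop 1 tendsto_id)
    have hdiff : Tendsto (fun t => Real.exp ν * (K (t + 1) - K t)) atTop (nhds 0) := by
      have := (hK1.sub hKlim).const_mul (Real.exp ν)
      simpa using this
    apply tendsto_of_tendsto_of_tendsto_of_le_of_le' tendsto_const_nhds hdiff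
    · filter_upwards [eventually_ge_atTop (0:ℝ)] with t ht
      exact mul_nonneg (Real.exp_pos _).le (hfnn t ht)
    · filter_upwards [eventually_ge_atTop (0:ℝ)] with t ht
      have hadj : K t + (∫ s in t..(t+1), Real.exp (-ν * s) * fe s) = K (t + 1) :=
        intervalIntegral.integral_add_adjacent_intervals (hKii 0 t) (hKii t (t+1))
      have hmono : Real.exp (-ν * (t+1)) * f t ≤ ∫ s in t..(t+1), Real.exp (-ν * s) * fe s := by
        have hconst : (∫ _ in t..(t+1), Real.exp (-ν * (t+1)) * f t)
            = Real.exp (-ν * (t+1)) * f t := by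
          rw [intervalIntegral.integral_const]
          simp
        rw [← hconst]
        apply intervalIntegral.integral_mono_on (by linarith)
          (intervalIntegrable_const) (hKii t (t+1))
        intro s hs
        have hs0 : (0:ℝ) ≤ s := le_trans ht hs.1
        have hfes : fe s = f s := by simp only [hfedef, max_eq_left hs0]
        rw [hfes]
        have h1 : Real.exp (-ν * (t+1)) ≤ Real.exp (-ν * s) :=
          Real.exp_le_exp.mpr (by nlinarith [hs.2])
        have h2 : f t ≤ f s := hfmono ht hs0 hs.1
        exact mul_le_mul h1 h2 (hfnn t ht) (Real.exp_pos _).le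
      have he2 : Real.exp (-ν * t) = Real.exp ν * Real.exp (-ν * (t+1)) := by
        rw [← Real.exp_add]; ring_nf
      rw [he2]
      have : Real.exp ν * (Real.exp (-ν * (t+1)) * f t) ≤ Real.exp ν * (K (t+1) - K t) := by
        apply mul_le_mul_of_nonneg_left _ (Real.exp_pos ν).le
        linarith [hmono, hadj]
      linarith [this]
  have hfinal : Tendsto (fun t => Real.exp (-ν * t) * f t + ν * K t) atTop
      (nhds (0 + ν * ∫ r in Set.Ioi (0:ℝ), Real.exp (-ν * r) * fe r)) :=
    htail.add (hKlim.const_mul ν)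
  rw [hIeq]
  have : (ν * ∫ r in Set.Ioi (0:ℝ), Real.exp (-ν * r) * fe r)
      = 0 + ν * ∫ r in Set.Ioi (0:ℝ), Real.exp (-ν * r) * fe r := by ring
  rw [this]
  apply Tendsto.congr' _ hfinal
  filter_upwards [eventually_ge_atTop (0:ℝ)] with t ht
  exact (hmK t ht).symm
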